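/- arXiv:1807.08724 — 2 statements merged into one kernel-verified Lean document; each statement's English description precedes it below -/
import Mathlib

section
/- Let Ω ∈ L^{q'}(S_{Q-1}) with 1 < q < ∞, γ > -Q, λ ∈ (-1/q, 0), Φ : (0,∞) → [0,∞) measurable, and let H_{Φ,Ω} f(x) = ∫_0^∞ ∫_{S_{Q-1}} (Φ(t)/t) Ω(y') f(δ_{t^{-1}|x|_h} y') dσ(y') dt. For f(x) = |x|_h^{(Q+γ)λ} |Ω(δ_{|x|_h^{-1}}x)|^{q'-2} \overline{Ω}(δ_{|x|_h^{-1}}x), one has H_{Φ,Ω} f(x) = ‖Ω‖_{L^{q'}(S_{Q-1})}^{q'} (∫_0^∞ Φ(t) t^{-1-(Q+γ)λ} dt) · |x|_h^{(Q+γ)λ} for all x ≠ 0. -/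
open MeasureTheory ENNReal Set

noncomputable section

/-- Heisenberg dilation: scales the first `2n` coordinates by `r` and the last by `r²`. -/
def dil (n : ℕ) (r : ℝ) (x : Fin (2*n+1) → ℝ) : Fin (2*n+1) → ℝ :=
  fun i => if i.val < 2*n then r * x i else r^2 * x i

/-- Homogeneous (Korányi) norm on the Heisenberg group `Hⁿ = ℝ^{2n+1}`. -/
def hnorm (n : ℕ) (x : Fin (2*n+1) → ℝ) : ℝ :=
  ((∑ i : Fin (2*n+1), if i.val < 2*n then (x i)^2 else (0:ℝ))^2
    + (x ⟨2*n, by omega⟩)^2) ^ ((1:ℝ)/4)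

/-- Closed ball `B_R = {|x|_h ≤ R}`. -/
def hball (n : ℕ) (R : ℝ) : Set (Fin (2*n+1) → ℝ) := {x | hnorm n x ≤ R}

/-- The rough Hausdorff operator on the Heisenberg group:
`H_{Φ,Ω} f(x) = ∫_0^∞ ∫_{S_{Q-1}} (Φ(t)/t) Ω(y') f(δ_{t⁻¹|x|_h} y') dσ(y') dt`. -/
def roughHausdorff (n : ℕ) (Φ : ℝ → ℝ) (Ω : (Fin (2*n+1) → ℝ) → ℂ)
    (σ : Measure (Fin (2*n+1) → ℝ)) (f : (Fin (2*n+1) → ℝ) → ℂ)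
    (x : Fin (2*n+1) → ℝ) : ℂ :=
  ∫ t in Ioi (0:ℝ), ∫ y, (Φ t / t) • (Ω y * f (dil n (hnorm n x / t) y)) ∂σ


lemma dil_dil (n : ℕ) (a b : ℝ) (x : Fin (2*n+1) → ℝ) :
    dil n a (dil n b x) = dil n (a*b) x := by
  funext i; unfold dil; split <;> ring

lemma dil_one (n : ℕ) (x : Fin (2*n+1) → ℝ) : dil n 1 x = x := by
  funext i; unfold dil; split <;> ring

lemma hnorm_nonneg (n : ℕ) (x : Fin (2*n+1) → ℝ) : 0 ≤ hnorm n x :=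
  Real.rpow_nonneg (by positivity) _

lemma hnorm_pos (n : ℕ) (x : Fin (2*n+1) → ℝ) (hx : x ≠ 0) : 0 < hnorm n x := by
  obtain ⟨i, hi0⟩ := Function.ne_iff.mp hx
  have hi : x i ≠ 0 := by simpa using hi0
  unfold hnorm
  apply Real.rpow_pos_of_pos
  by_cases h : (i:ℕ) < 2*n
  · have hS : (0:ℝ) < ∑ j : Fin (2*n+1), if (j:ℕ) < 2*n then (x j)^2 else (0:ℝ) := by
      refine lt_of_lt_of_le ?_ (Finset.single_le_sum (f := fun j : Fin (2*n+1) =>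
        if (j:ℕ) < 2*n then (x j)^2 else (0:ℝ)) (fun j _ => by positivity)
        (Finset.mem_univ i))
      simp only [h, if_true]
      positivity
    exact add_pos_of_pos_of_nonneg (pow_pos hS 2) (sq_nonneg _)
  · have hieq : i = (⟨2*n, by omega⟩ : Fin (2*n+1)) := by
      apply Fin.ext; have := i.isLt; simp only []; omega
    have hc : x ⟨2*n, by omega⟩ ≠ 0 := by rw [← hieq]; exact hi
    positivity

lemma hnorm_dil (n : ℕ) {r : ℝ} (hr : 0 ≤ r) (x : Fin (2*n+1) → ℝ) :
    hnorm n (dil n r x) = r * hnorm n x := by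
  unfold hnorm dil
  have hs : (∑ i : Fin (2*n+1), if (i:ℕ) < 2*n then
        ((if (i:ℕ) < 2*n then r * x i else r^2 * x i))^2 else (0:ℝ))
      = r^2 * ∑ i : Fin (2*n+1), (if (i:ℕ) < 2*n then (x i)^2 else (0:ℝ)) := by
    rw [Finset.mul_sum]
    refine Finset.sum_congr rfl fun i _ => ?_
    by_cases h : (i:ℕ) < 2*n <;> simp only [h, if_true, if_false] <;> ring
  rw [hs]
  have hlast : ¬ (((⟨2*n, by omega⟩ : Fin (2*n+1)) : ℕ) < 2*n) := by simp
  rw [if_neg hlast]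
  set S := ∑ i : Fin (2*n+1), (if (i:ℕ) < 2*n then (x i)^2 else (0:ℝ)) with hSdef
  set c := x ⟨2*n, by omega⟩ with hcdef
  have h4 : (r^2*S)^2 + (r^2*c)^2 = r^4 * (S^2 + c^2) := by ring
  rw [h4, Real.mul_rpow (by positivity) (by positivity)]
  congr 1
  rw [← Real.rpow_natCast r 4, ← Real.rpow_mul hr]
  norm_num

/-- for the test function
`f(x) = |x|_h^{(Q+γ)λ} |Ω(δ_{|x|_h⁻¹}x)|^{q'-2} conj(Ω(δ_{|x|_h⁻¹}x))` one has
`H_{Φ,Ω}f(x) = ‖Ω‖_{L^{q'}}^{q'} (∫_0^∞ Φ(t) t^{-1-(Q+γ)λ} dt) |x|_h^{(Q+γ)λ}` for `x ≠ 0`. -/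
theorem roughHausdorff_test_function (n : ℕ) (q γ lam : ℝ) (hq : 1 < q)
    (hγ : -(2*(n:ℝ)+2) < γ) (hlam1 : -(1/q) < lam) (hlam2 : lam < 0)
    (σ : Measure (Fin (2*n+1) → ℝ))
    (hσ : ∀ᵐ y ∂σ, hnorm n y = 1)
    (Φ : ℝ → ℝ) (hΦm : Measurable Φ) (hΦ0 : ∀ t, 0 ≤ Φ t)
    (hΦint : IntegrableOn (fun t => Φ t * t ^ (-1 - ((2*(n:ℝ)+2) + γ) * lam)) (Ioi 0))
    (Ω : (Fin (2*n+1) → ℝ) → ℂ) (hΩm : Measurable Ω)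
    (hΩint : Integrable (fun y => ‖Ω y‖ ^ (q/(q-1))) σ)
    (f : (Fin (2*n+1) → ℝ) → ℂ)
    (hf : ∀ x, f x = (((hnorm n x ^ (((2*(n:ℝ)+2)+γ) * lam) *
            ‖Ω (dil n (hnorm n x)⁻¹ x)‖ ^ (q/(q-1) - 2) : ℝ) : ℂ) *
          (starRingEnd ℂ) (Ω (dil n (hnorm n x)⁻¹ x)))) :
    ∀ x : Fin (2*n+1) → ℝ, x ≠ 0 →
      roughHausdorff n Φ Ω σ f x =
        (((∫ y, ‖Ω y‖ ^ (q/(q-1)) ∂σ) *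
            (∫ t in Ioi (0:ℝ), Φ t * t ^ (-1 - ((2*(n:ℝ)+2) + γ) * lam)) *
            hnorm n x ^ (((2*(n:ℝ)+2) + γ) * lam) : ℝ) : ℂ) := by
  intro x hx
  have hR : 0 < hnorm n x := hnorm_pos n x hx
  set R := hnorm n x with hRdef
  set A : ℝ := ((2*(n:ℝ)+2) + γ) * lam with hAdef
  set q' : ℝ := q/(q-1) with hq'def
  have hq'pos : 0 < q' := by
    apply div_pos (by linarith) (by linarith)
  set I : ℝ := ∫ y, ‖Ω y‖ ^ q' ∂σ with hIdef
  unfold roughHausdorff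
  have inner : ∀ t ∈ Ioi (0:ℝ),
      (∫ y, (Φ t / t) • (Ω y * f (dil n (hnorm n x / t) y)) ∂σ)
        = ((Φ t / t * (R / t) ^ A * I : ℝ) : ℂ) := by
    intro t ht
    have htp : (0:ℝ) < t := ht
    have hrt : 0 < R / t := div_pos hR htp
    have hae : ∀ᵐ y ∂σ, (Φ t / t) • (Ω y * f (dil n (R / t) y))
        = (Φ t / t * (R/t)^A) • (((‖Ω y‖ ^ q' : ℝ) : ℂ)) := by
      filter_upwards [hσ] with y hy
      rw [hf, hnorm_dil n hrt.le, hy, mul_one, dil_dil, inv_mul_cancel₀ hrt.ne',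
        dil_one]
      by_cases h0 : Ω y = 0
      · simp [h0, Real.zero_rpow hq'pos.ne']
      · have hn : (0:ℝ) < ‖Ω y‖ := norm_pos_iff.mpr h0
        have key : Ω y * ((((R/t)^A * ‖Ω y‖^(q'-2) : ℝ) : ℂ) *
              (starRingEnd ℂ) (Ω y)) = (((R/t)^A * ‖Ω y‖^q' : ℝ) : ℂ) := by
          have h1 : Ω y * ((((R/t)^A * ‖Ω y‖^(q'-2) : ℝ) : ℂ) *
              (starRingEnd ℂ) (Ω y))
              = (((R/t)^A * ‖Ω y‖^(q'-2) : ℝ) : ℂ) * (Ω y * (starRingEnd ℂ) (Ω y)) := by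
            ring
          rw [h1, Complex.mul_conj, Complex.normSq_eq_norm_sq,
            ← Complex.ofReal_mul]
          congr 1
          rw [mul_assoc, ← Real.rpow_natCast (‖Ω y‖) 2, ← Real.rpow_add hn]
          norm_num
        rw [key, Complex.real_smul, Complex.real_smul]
        push_cast
        ring
    rw [integral_congr_ae hae, integral_smul,
      show (∫ a, ((‖Ω a‖ ^ q' : ℝ) : ℂ) ∂σ) = ((I : ℝ) : ℂ) from integral_ofReal,
      Complex.real_smul, ← Complex.ofReal_mul]
  rw [setIntegral_congr_fun measurableSet_Ioi inner,
    show (∫ t in Ioi (0:ℝ), ((Φ t / t * (R / t) ^ A * I : ℝ) : ℂ))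
      = ((∫ t in Ioi (0:ℝ), Φ t / t * (R / t) ^ A * I : ℝ) : ℂ) from integral_ofReal]
  congr 1
  have houter : ∀ t ∈ Ioi (0:ℝ),
      Φ t / t * (R / t) ^ A * I = (I * R ^ A) * (Φ t * t ^ (-1 - A)) := by
    intro t ht
    have htp : (0:ℝ) < t := ht
    rw [Real.div_rpow hR.le htp.le]
    have h1 : t ^ (-1 - A) = t⁻¹ * (t ^ A)⁻¹ := by
      rw [show (-1 - A) = (-1) + (-A) by ring, Real.rpow_add htp,
        Real.rpow_neg_one, Real.rpow_neg htp.le]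
    rw [h1]
    have ht0 : t ≠ 0 := htp.ne'
    have htA : t ^ A ≠ 0 := (Real.rpow_pos_of_pos htp A).ne'
    field_simp
  rw [setIntegral_congr_fun measurableSet_Ioi houter, integral_const_mul]
  ring
end
end

section
/- (Sufficiency part of Theorem 3.1) Let 1 < q < ∞, λ ∈ (-1/q, 0), γ > -Q, ω(x) = |x|_h^γ, and Ω ∈ L^{q'}(S_{Q-1}). If C_1 = ∫_0^∞ Φ(t) t^{-1-(Q+γ)λ} dt < ∞, then the rough Hausdorff operator H_{Φ,Ω} f(x) = ∫_0^∞ ∫_{S_{Q-1}} (Φ(t)/t) Ω(y') f(δ_{t^{-1}|x|_h} y') dσ(y') dt is bounded on the weighted central Morrey space Ḃ^{q,λ}_ω(H^n), with operator norm ≲ C_1 ‖Ω‖_{L^{q'}(S_{Q-1})}. -/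
open MeasureTheory ENNReal Set

noncomputable section

/-- Weighted central Morrey norm
`‖f‖ = sup_{R>0} (ω(B_R)^{-(1+λq)} ∫_{B_R} |f|^q ω dx)^{1/q}`, with `ω = |·|_h^γ`,
valued in `ℝ≥0∞`. -/
def morreyNorm (n : ℕ) (q γ lam : ℝ) (f : (Fin (2*n+1) → ℝ) → ℂ) : ℝ≥0∞ :=
  ⨆ (R : ℝ) (_ : 0 < R),
    ((∫⁻ x in hball n R, ENNReal.ofReal (hnorm n x ^ γ)) ^ (-(1 + lam * q)) *
      ∫⁻ x in hball n R, ENNReal.ofReal (‖f x‖ ^ q * hnorm n x ^ γ)) ^ (1/q)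

lemma continuous_hnorm (n : ℕ) : Continuous (hnorm n) := by
  apply Continuous.rpow_const
  · apply Continuous.add
    · apply Continuous.pow
      apply continuous_finset_sum
      intro i _
      by_cases h : i.val < 2*n <;> simp only [h, if_true, if_false] <;> fun_prop
    · fun_prop
  · intro x; right; norm_num

lemma measurable_hnorm (n : ℕ) : Measurable (hnorm n) := (continuous_hnorm n).measurable

lemma measurableSet_hball (n : ℕ) (R : ℝ) : MeasurableSet (hball n R) :=
  (measurable_hnorm n) measurableSet_Iic

lemma measurable_dil (n : ℕ) : Measurable (fun p : ℝ × (Fin (2*n+1) → ℝ) => dil n p.1 p.2) := by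
  apply measurable_pi_lambda
  intro i
  by_cases h : i.val < 2*n <;> simp only [dil, h, if_true, if_false] <;> fun_prop

lemma measurable_dil_const (n : ℕ) (r : ℝ) : Measurable (dil n r) :=
  (measurable_dil n).comp (measurable_const.prodMk measurable_id)

lemma lintegral_Ioi_comp_mul {t : ℝ} (ht : 0 < t) (F : ℝ → ℝ≥0∞) (hF : Measurable F) :
    ∫⁻ r in Ioi (0:ℝ), F r = ENNReal.ofReal t * ∫⁻ u in Ioi (0:ℝ), F (t * u) := by
  have hind : Measurable ((Ioi (0:ℝ)).indicator F) := hF.indicator measurableSet_Ioi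
  have h1 : ∫⁻ u in Ioi (0:ℝ), F (t * u) = ∫⁻ u, ((Ioi (0:ℝ)).indicator F) (t * u) := by
    rw [← lintegral_indicator measurableSet_Ioi]
    congr 1; ext u
    have hmem : u ∈ Ioi (0:ℝ) ↔ t * u ∈ Ioi (0:ℝ) := by
      simp only [mem_Ioi]
      constructor
      · intro hu; exact mul_pos ht hu
      · intro hu; nlinarith
    simp only [Set.indicator_apply]
    by_cases hu : u ∈ Ioi (0:ℝ)
    · rw [if_pos hu, if_pos (hmem.1 hu)]
    · rw [if_neg hu, if_neg (fun h => hu (hmem.2 h))]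
  have h2 : ∫⁻ u, ((Ioi (0:ℝ)).indicator F) (t * u)
      = ∫⁻ r, ((Ioi (0:ℝ)).indicator F) r ∂(Measure.map (fun u : ℝ => t * u) volume) := by
    rw [lintegral_map hind (by fun_prop)]
  have h3 : Measure.map (fun u : ℝ => t * u) volume = ENNReal.ofReal |t⁻¹| • volume := by
    simpa using Real.map_volume_mul_left (ne_of_gt ht)
  rw [h1, h2, h3, lintegral_smul_measure, smul_eq_mul, lintegral_indicator measurableSet_Ioi,
    abs_of_pos (by positivity), ← mul_assoc, ← ENNReal.ofReal_mul ht.le,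
    mul_inv_cancel₀ (ne_of_gt ht), ENNReal.ofReal_one, one_mul]

lemma lintegral_Ioc_rpow {p s : ℝ} (hp : -1 < p) (hs : 0 < s) :
    ∫⁻ r in Ioc (0:ℝ) s, ENNReal.ofReal (r ^ p) = ENNReal.ofReal (s ^ (p+1) / (p+1)) := by
  rw [← ofReal_integral_eq_lintegral_ofReal]
  · congr 1
    rw [← intervalIntegral.integral_of_le hs.le, integral_rpow (Or.inl hp),
      Real.zero_rpow (by linarith)]
    ring
  · exact (intervalIntegrable_iff_integrableOn_Ioc_of_le hs.le).1 (intervalIntegral.intervalIntegrable_rpow' hp)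
  · refine (ae_restrict_iff' measurableSet_Ioc).2 (ae_of_all _ fun r hr => ?_)
    exact Real.rpow_nonneg hr.1.le p

section Polar

variable {n : ℕ} {σ : Measure (Fin (2*n+1) → ℝ)}

lemma polar_ball (hσ : ∀ᵐ y ∂σ, hnorm n y = 1)
    (hpolar : ∀ g : (Fin (2*n+1) → ℝ) → ℝ≥0∞, Measurable g →
      ∫⁻ x, g x = ∫⁻ r in Ioi (0:ℝ),
        (∫⁻ y, g (dil n r y) ∂σ) * ENNReal.ofReal (r ^ (2*n+1)))
    {s : ℝ} (F : ℝ → ℝ≥0∞) (hF : Measurable F)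
    (G : (Fin (2*n+1) → ℝ) → ℝ≥0∞) (hG : Measurable G) :
    ∫⁻ x in hball n s, F (hnorm n x) * G x
      = ∫⁻ r in Ioc (0:ℝ) s,
          F r * (∫⁻ y, G (dil n r y) ∂σ) * ENNReal.ofReal (r ^ (2*n+1)) := by
  set g : (Fin (2*n+1) → ℝ) → ℝ≥0∞ :=
    (hball n s).indicator (fun x => F (hnorm n x) * G x) with hg
  have hgm : Measurable g :=
    ((hF.comp (measurable_hnorm n)).mul hG).indicator (measurableSet_hball n s)
  have key : ∀ r ∈ Ioi (0:ℝ),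
      (∫⁻ y, g (dil n r y) ∂σ) * ENNReal.ofReal (r ^ (2*n+1))
      = (Ioc (0:ℝ) s).indicator
          (fun r => F r * (∫⁻ y, G (dil n r y) ∂σ) * ENNReal.ofReal (r ^ (2*n+1))) r := by
    intro r hr
    rw [mem_Ioi] at hr
    have hdil : ∀ᵐ y ∂σ, hnorm n (dil n r y) = r := by
      filter_upwards [hσ] with y hy
      rw [hnorm_dil n hr.le, hy, mul_one]
    by_cases hrs : r ≤ s
    · have : ∫⁻ y, g (dil n r y) ∂σ = ∫⁻ y, F r * G (dil n r y) ∂σ := by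
        apply lintegral_congr_ae
        filter_upwards [hdil] with y hy
        rw [hg, Set.indicator_of_mem (by simpa [hball, hy] using hrs), hy]
      have hGm : Measurable fun y => G (dil n r y) := hG.comp (measurable_dil_const n r)
      rw [this, lintegral_const_mul _ hGm,
        Set.indicator_of_mem (show r ∈ Ioc (0:ℝ) s by exact ⟨hr, hrs⟩)]
    · have : ∫⁻ y, g (dil n r y) ∂σ = ∫⁻ y, 0 ∂σ := by
        apply lintegral_congr_ae
        filter_upwards [hdil] with y hy
        rw [hg, Set.indicator_of_notMem (by simpa [hball, hy] using hrs)]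
      rw [this, lintegral_zero, zero_mul,
        Set.indicator_of_notMem (show r ∉ Ioc (0:ℝ) s by exact fun h => hrs h.2)]
  calc ∫⁻ x in hball n s, F (hnorm n x) * G x
      = ∫⁻ x, g x := (lintegral_indicator (measurableSet_hball n s) _).symm
    _ = ∫⁻ r in Ioi (0:ℝ), (∫⁻ y, g (dil n r y) ∂σ) * ENNReal.ofReal (r ^ (2*n+1)) :=
        hpolar g hgm
    _ = ∫⁻ r in Ioi (0:ℝ), (Ioc (0:ℝ) s).indicator
          (fun r => F r * (∫⁻ y, G (dil n r y) ∂σ) * ENNReal.ofReal (r ^ (2*n+1))) r :=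
        setLIntegral_congr_fun measurableSet_Ioi key
    _ = ∫⁻ r in Ioc (0:ℝ) s,
          F r * (∫⁻ y, G (dil n r y) ∂σ) * ENNReal.ofReal (r ^ (2*n+1)) := by
        rw [lintegral_indicator measurableSet_Ioc, Measure.restrict_restrict measurableSet_Ioc,
          Set.inter_eq_left.2 (fun x hx => hx.1)]

end Polar

section Sigma

variable {n : ℕ} {σ : Measure (Fin (2*n+1) → ℝ)}

lemma W_eq (hσ : ∀ᵐ y ∂σ, hnorm n y = 1)
    (hpolar : ∀ g : (Fin (2*n+1) → ℝ) → ℝ≥0∞, Measurable g →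
      ∫⁻ x, g x = ∫⁻ r in Ioi (0:ℝ),
        (∫⁻ y, g (dil n r y) ∂σ) * ENNReal.ofReal (r ^ (2*n+1)))
    {γ s : ℝ} (hγ : -(2*(n:ℝ)+2) < γ) (hs : 0 < s) :
    ∫⁻ x in hball n s, ENNReal.ofReal (hnorm n x ^ γ)
      = σ univ * ENNReal.ofReal (s ^ ((2*(n:ℝ)+2) + γ) / ((2*(n:ℝ)+2) + γ)) := by
  have hFm : Measurable fun r : ℝ => ENNReal.ofReal (r ^ γ) := by fun_prop
  have h := polar_ball hσ hpolar (s := s) _ hFm (fun _ => (1:ℝ≥0∞)) measurable_const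
  simp only [mul_one, lintegral_one, Measure.restrict_apply, MeasurableSet.univ,
    univ_inter] at h
  rw [h]
  have h2 : ∀ r ∈ Ioc (0:ℝ) s,
      ENNReal.ofReal (r ^ γ) * σ univ * ENNReal.ofReal (r ^ (2*n+1))
      = σ univ * ENNReal.ofReal (r ^ (γ + (2*(n:ℝ)+1))) := by
    intro r hr
    rw [Real.rpow_add hr.1, ← Real.rpow_natCast r (2*n+1)]
    push_cast
    rw [ENNReal.ofReal_mul (Real.rpow_nonneg hr.1.le _)]
    ring
  rw [setLIntegral_congr_fun measurableSet_Ioc h2,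
    lintegral_const_mul _ (by fun_prop), lintegral_Ioc_rpow (by linarith) hs,
    show γ + (2*(n:ℝ)+1) + 1 = (2*(n:ℝ)+2) + γ from by ring]

lemma vol_hball_ne_zero (n : ℕ) : volume (hball n 1) ≠ 0 := by
  set ε : ℝ := (2*(n:ℝ)+2)⁻¹ with hε
  have hεpos : 0 < ε := by rw [hε]; positivity
  have hsub : (univ.pi fun _ : Fin (2*n+1) => Icc (-ε) ε) ⊆ hball n 1 := by
    intro x hx
    simp only [mem_pi, mem_univ, forall_true_left, mem_Icc] at hx
    have hm : (0:ℝ) ≤ (n:ℝ) := Nat.cast_nonneg n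
    have hε2 : ε ≤ 1/2 := by
      rw [hε]; rw [inv_le_comm₀ (by linarith) (by norm_num)]; linarith
    have hε3 : (2*(n:ℝ)+1) * ε ≤ 1 := by
      rw [hε]
      have : (2*(n:ℝ)+1) ≤ (2*(n:ℝ)+2) := by linarith
      calc (2*(n:ℝ)+1) * (2*(n:ℝ)+2)⁻¹ ≤ (2*(n:ℝ)+2) * (2*(n:ℝ)+2)⁻¹ := by
            apply mul_le_mul_of_nonneg_right this (by positivity)
        _ = 1 := mul_inv_cancel₀ (by positivity)
    have hS : (∑ i : Fin (2*n+1), if i.val < 2*n then (x i)^2 else (0:ℝ))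
        ≤ (2*(n:ℝ)+1) * ε^2 := by
      have : ∀ i : Fin (2*n+1), (if i.val < 2*n then (x i)^2 else (0:ℝ)) ≤ ε^2 := by
        intro i
        by_cases h : i.val < 2*n
        · simp only [h, if_true]
          have := (hx i).1; have := (hx i).2
          nlinarith
        · simp only [h, if_false]; positivity
      calc (∑ i : Fin (2*n+1), if i.val < 2*n then (x i)^2 else (0:ℝ))
          ≤ ∑ _i : Fin (2*n+1), ε^2 := Finset.sum_le_sum fun i _ => this i
        _ = (2*(n:ℝ)+1) * ε^2 := by
            rw [Finset.sum_const, Finset.card_univ, Fintype.card_fin]; push_cast; ring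
    have hT : (x ⟨2*n, by omega⟩)^2 ≤ ε^2 := by
      have := (hx ⟨2*n, by omega⟩).1; have := (hx ⟨2*n, by omega⟩).2
      nlinarith
    show hnorm n x ≤ 1
    unfold hnorm
    apply Real.rpow_le_one (by positivity) _ (by norm_num)
    have hS0 : (0:ℝ) ≤ ∑ i : Fin (2*n+1), if i.val < 2*n then (x i)^2 else (0:ℝ) := by
      apply Finset.sum_nonneg; intro i _; positivity
    have hSε : (∑ i : Fin (2*n+1), if i.val < 2*n then (x i)^2 else (0:ℝ)) ≤ ε := by
      calc (∑ i : Fin (2*n+1), if i.val < 2*n then (x i)^2 else (0:ℝ))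
          ≤ (2*(n:ℝ)+1) * ε^2 := hS
        _ = ((2*(n:ℝ)+1) * ε) * ε := by ring
        _ ≤ 1 * ε := by apply mul_le_mul_of_nonneg_right hε3 hεpos.le
        _ = ε := one_mul ε
    nlinarith [hSε, hε2, hT, hεpos, hS0]
  intro h0
  have := measure_mono (μ := volume) hsub
  rw [h0, le_zero_iff] at this
  rw [volume_pi_pi] at this
  simp only [Real.volume_Icc, Finset.prod_const, Finset.card_univ, Fintype.card_fin] at this
  have h2 : (0:ℝ) < ε - (-ε) := by linarith
  exact (pow_ne_zero _ (by simp [ENNReal.ofReal_eq_zero]; linarith)) this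

lemma vol_hball_ne_top (n : ℕ) : volume (hball n 1) ≠ ∞ := by
  have hsub : hball n 1 ⊆ univ.pi fun _ : Fin (2*n+1) => Icc (-1:ℝ) 1 := by
    intro x hx
    have hx' : hnorm n x ≤ 1 := hx
    set S := ∑ i : Fin (2*n+1), if i.val < 2*n then (x i)^2 else (0:ℝ) with hSdef
    have hS0 : 0 ≤ S := Finset.sum_nonneg fun i _ => by positivity
    have h1 : S^2 + (x ⟨2*n, by omega⟩)^2 ≤ 1 := by
      by_contra hco
      push_neg at hco
      have := Real.rpow_lt_rpow (by norm_num) hco (by norm_num : (0:ℝ) < 1/4)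
      rw [Real.one_rpow] at this
      unfold hnorm at hx'
      rw [← hSdef] at hx'
      linarith
    simp only [mem_pi, mem_univ, forall_true_left, mem_Icc]
    intro i
    by_cases h : i.val < 2*n
    · have hterm : (x i)^2 ≤ S := by
        rw [hSdef]
        have := Finset.single_le_sum
          (f := fun j : Fin (2*n+1) => if j.val < 2*n then (x j)^2 else (0:ℝ))
          (fun j _ => by positivity) (Finset.mem_univ i)
        simpa [h] using this
      have hx2 : (x i)^2 ≤ 1 := by
        nlinarith [sq_nonneg (S - 1), sq_nonneg (x ⟨2*n, by omega⟩)]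
      constructor <;> nlinarith [sq_nonneg (x i + 1), sq_nonneg (x i - 1)]
    · have hieq : i = ⟨2*n, by omega⟩ := by
        apply Fin.ext; simp only []; omega
      rw [hieq]
      have hx2 : (x ⟨2*n, by omega⟩ : ℝ)^2 ≤ 1 := by nlinarith [sq_nonneg S]
      constructor <;>
        nlinarith [sq_nonneg ((x ⟨2*n, by omega⟩ : ℝ) + 1), sq_nonneg ((x ⟨2*n, by omega⟩ : ℝ) - 1)]
  intro htop
  have := measure_mono (μ := volume) hsub
  rw [htop, top_le_iff, volume_pi_pi] at this
  simp only [Real.volume_Icc, Finset.prod_const, Finset.card_univ, Fintype.card_fin] at this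
  exact (ENNReal.pow_ne_top ENNReal.ofReal_ne_top) this

lemma sigma_univ_facts (hσ : ∀ᵐ y ∂σ, hnorm n y = 1)
    (hpolar : ∀ g : (Fin (2*n+1) → ℝ) → ℝ≥0∞, Measurable g →
      ∫⁻ x, g x = ∫⁻ r in Ioi (0:ℝ),
        (∫⁻ y, g (dil n r y) ∂σ) * ENNReal.ofReal (r ^ (2*n+1))) :
    σ univ ≠ 0 ∧ σ univ ≠ ∞ := by
  have h := W_eq hσ hpolar (γ := 0) (s := 1) (by have : (0:ℝ) ≤ n := Nat.cast_nonneg n; linarith) one_pos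
  simp only [Real.rpow_zero, ENNReal.ofReal_one, Real.one_rpow, add_zero] at h
  rw [lintegral_one, Measure.restrict_apply MeasurableSet.univ, univ_inter] at h
  have hk0 : ENNReal.ofReal ((1:ℝ) / (2*(n:ℝ)+2)) ≠ 0 := by
    rw [ne_eq, ENNReal.ofReal_eq_zero, not_le]
    positivity
  constructor
  · intro h0
    rw [h0, zero_mul] at h
    exact vol_hball_ne_zero n h
  · intro h0
    rw [h0, ENNReal.top_mul hk0] at h
    exact vol_hball_ne_top n h

end Sigma

lemma ofReal_rpow_ne_top {t : ℝ} (ht : 0 < t) (a : ℝ) : (ENNReal.ofReal t) ^ a ≠ ∞ := by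
  intro h
  rcases ENNReal.rpow_eq_top_iff.1 h with ⟨h1, _⟩ | ⟨h1, _⟩
  · exact (ENNReal.ofReal_pos.2 ht).ne' h1
  · exact ENNReal.ofReal_ne_top h1

lemma ofReal_rpow_ne_zero {t : ℝ} (ht : 0 < t) (a : ℝ) : (ENNReal.ofReal t) ^ a ≠ 0 :=
  (ENNReal.rpow_pos (ENNReal.ofReal_pos.2 ht) ENNReal.ofReal_ne_top).ne'

lemma ofReal_norm_rpow_mul (z : ℂ) {a q : ℝ} (ha : 0 ≤ a) (hq : 0 ≤ q) :
    ENNReal.ofReal (‖z‖ ^ q * a) = (‖z‖₊ : ℝ≥0∞) ^ q * ENNReal.ofReal a := by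
  rw [ENNReal.ofReal_mul (Real.rpow_nonneg (norm_nonneg z) q)]
  congr 1
  rw [← ENNReal.ofReal_rpow_of_nonneg (norm_nonneg z) hq, ofReal_norm, enorm_eq_nnnorm]

/-- sufficiency in Theorem 3.1: if
`C₁ = ∫_0^∞ Φ(t) t^{-1-(Q+γ)λ} dt < ∞` then `H_{Φ,Ω}` is bounded on the weighted
central Morrey space `Ḃ^{q,λ}_ω(Hⁿ)` with operator norm `≲ C₁ ‖Ω‖_{L^{q'}(S_{Q-1})}`. -/
theorem roughHausdorff_centralMorrey_bounded (n : ℕ) (q γ lam : ℝ) (hq : 1 < q)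
    (hγ : -(2*(n:ℝ)+2) < γ) (hlam1 : -(1/q) < lam) (hlam2 : lam < 0)
    (σ : Measure (Fin (2*n+1) → ℝ))
    (hσ : ∀ᵐ y ∂σ, hnorm n y = 1)
    (hpolar : ∀ g : (Fin (2*n+1) → ℝ) → ℝ≥0∞, Measurable g →
      ∫⁻ x, g x = ∫⁻ r in Ioi (0:ℝ),
        (∫⁻ y, g (dil n r y) ∂σ) * ENNReal.ofReal (r ^ (2*n+1)))
    (Φ : ℝ → ℝ) (hΦm : Measurable Φ) (hΦ0 : ∀ t, 0 ≤ Φ t)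
    (hC1 : IntegrableOn (fun t => Φ t * t ^ (-1 - ((2*(n:ℝ)+2) + γ) * lam)) (Ioi 0))
    (Ω : (Fin (2*n+1) → ℝ) → ℂ) (hΩm : Measurable Ω)
    (hΩ : MemLp Ω (ENNReal.ofReal (q/(q-1))) σ) :
    ∃ C : ℝ, 0 < C ∧ ∀ f : (Fin (2*n+1) → ℝ) → ℂ, Measurable f →
      morreyNorm n q γ lam (roughHausdorff n Φ Ω σ f) ≤
        ENNReal.ofReal (C * ∫ t in Ioi (0:ℝ), Φ t * t ^ (-1 - ((2*(n:ℝ)+2) + γ) * lam)) *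
          eLpNorm Ω (ENNReal.ofReal (q/(q-1))) σ * morreyNorm n q γ lam f := by
  obtain ⟨hσ0, hσtop⟩ := sigma_univ_facts hσ hpolar
  haveI : IsFiniteMeasure σ := ⟨hσtop.lt_top⟩
  have hq0 : (0:ℝ) < q := by linarith
  have hq1 : (0:ℝ) < q - 1 := by linarith
  set p' : ℝ := q / (q-1) with hp'def
  have hp'pos : 0 < p' := div_pos hq0 hq1
  have hconj : p'.HolderConjugate q := by
    rw [hp'def]; exact (Real.HolderConjugate.conjExponent hq).symm
  have hinv : 1/p' + 1/q = 1 := by rw [hp'def]; field_simp; ring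
  have hqp' : (1/p') * q = q - 1 := by rw [hp'def]; field_simp
  set P : ℝ := 2*(n:ℝ)+2 + γ with hPdef
  have hP : 0 < P := by rw [hPdef]; linarith
  set c : ℝ := P * lam with hcdef
  set e : ℝ := 1 + lam * q with hedef
  have he : 0 < e := by
    rw [hedef]
    have h1 : -(1/q) * q = -1 := by field_simp
    nlinarith
  set C₁ : ℝ := ∫ t in Ioi (0:ℝ), Φ t * t ^ (-1 - c) with hC₁def
  have hnn : 0 ≤ᵐ[volume.restrict (Ioi (0:ℝ))] fun t => Φ t * t ^ (-1 - c) :=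
    (ae_restrict_iff' measurableSet_Ioi).2 (ae_of_all _ fun t ht =>
      mul_nonneg (hΦ0 t) (Real.rpow_nonneg (le_of_lt ht) _))
  have hC₁0 : 0 ≤ C₁ := by
    rw [hC₁def]
    exact setIntegral_nonneg measurableSet_Ioi fun t ht =>
      mul_nonneg (hΦ0 t) (Real.rpow_nonneg (le_of_lt ht) _)
  have hA1 : ∫⁻ t in Ioi (0:ℝ), ENNReal.ofReal (Φ t * t ^ (-1 - c)) = ENNReal.ofReal C₁ := by
    rw [hC₁def, ofReal_integral_eq_lintegral_ofReal hC1 hnn]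
  have hWs : ∀ s : ℝ, 0 < s → ∫⁻ x in hball n s, ENNReal.ofReal (hnorm n x ^ γ)
      = σ univ * ENNReal.ofReal (s ^ P / P) := by
    intro s hs
    rw [W_eq hσ hpolar hγ hs, hPdef]
  have hWpos : ∀ s : ℝ, 0 < s → (0:ℝ) < s ^ P / P := fun s hs =>
    div_pos (Real.rpow_pos_of_pos hs P) hP
  have hWne0 : ∀ s : ℝ, 0 < s → σ univ * ENNReal.ofReal (s ^ P / P) ≠ 0 := fun s hs =>
    mul_ne_zero hσ0 (by rw [ne_eq, ENNReal.ofReal_eq_zero, not_le]; exact hWpos s hs)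
  have hWnetop : ∀ s : ℝ, 0 < s → σ univ * ENNReal.ofReal (s ^ P / P) ≠ ∞ := fun s hs =>
    ENNReal.mul_ne_top hσtop ENNReal.ofReal_ne_top
  have hσq0 : σ univ ^ ((1:ℝ)/q) ≠ 0 :=
    (ENNReal.rpow_pos (pos_iff_ne_zero.2 hσ0) hσtop).ne'
  have hσqtop : σ univ ^ ((1:ℝ)/q) ≠ ∞ :=
    ENNReal.rpow_ne_top_of_nonneg (by positivity) hσtop
  refine ⟨(σ univ ^ ((1:ℝ)/q)).toReal, ENNReal.toReal_pos hσq0 hσqtop, fun f hf => ?_⟩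
  have hCofReal : ENNReal.ofReal ((σ univ ^ ((1:ℝ)/q)).toReal * C₁)
      = σ univ ^ ((1:ℝ)/q) * ENNReal.ofReal C₁ := by
    rw [ENNReal.ofReal_mul ENNReal.toReal_nonneg, ENNReal.ofReal_toReal hσqtop]
  set E := eLpNorm Ω (ENNReal.ofReal p') σ with hEdef
  have hEeq : E = (∫⁻ y, (‖Ω y‖₊ : ℝ≥0∞) ^ p' ∂σ) ^ (1/p') := by
    rw [hEdef, eLpNorm_eq_lintegral_rpow_enorm_toReal
      (by rw [ne_eq, ENNReal.ofReal_eq_zero, not_le]; exact hp'pos) ENNReal.ofReal_ne_top,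
      ENNReal.toReal_ofReal hp'pos.le]
    rfl
  have hEtop : E ≠ ∞ := hΩ.2.ne
  set Gs : ℝ → ℝ≥0∞ := fun s => ∫⁻ y, (‖f (dil n s y)‖₊ : ℝ≥0∞) ^ q ∂σ with hGsdef
  have hGsm : Measurable Gs := by
    rw [hGsdef]
    apply Measurable.lintegral_prod_right (f := fun s y => (‖f (dil n s y)‖₊ : ℝ≥0∞) ^ q)
    have h1 : Measurable fun p : ℝ × (Fin (2*n+1) → ℝ) => f (dil n p.1 p.2) :=
      hf.comp (measurable_dil n)
    have hr : Measurable fun z : ℝ≥0∞ => z ^ q := by fun_prop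
    exact hr.comp h1.enorm
  set w : (Fin (2*n+1) → ℝ) → ℝ≥0∞ := fun x => ENNReal.ofReal (hnorm n x ^ γ) with hwdef
  have hwm : Measurable w := by
    have := measurable_hnorm n
    rw [hwdef]; fun_prop
  have hwtop : ∀ x, w x ≠ ∞ := fun x => ENNReal.ofReal_ne_top
  set φ : ℝ → ℝ≥0∞ :=
    fun t => ENNReal.ofReal (Φ t / t) * (ENNReal.ofReal t) ^ (c * (q-1)) with hφdef
  have hφm : Measurable φ := by rw [hφdef]; fun_prop
  have hφtop : ∀ t : ℝ, 0 < t → φ t ≠ ∞ := fun t ht => by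
    rw [hφdef]
    exact ENNReal.mul_ne_top ENNReal.ofReal_ne_top (ofReal_rpow_ne_top ht _)
  set B : (Fin (2*n+1) → ℝ) → ℝ≥0∞ :=
    fun x => ∫⁻ t in Ioi (0:ℝ), φ t * Gs (hnorm n x / t) with hBdef
  have hGsjoint : Measurable fun p : (Fin (2*n+1) → ℝ) × ℝ => Gs (hnorm n p.1 / p.2) := by
    have h1 := measurable_hnorm n
    exact hGsm.comp (by fun_prop)
  have hBm : Measurable B := by
    rw [hBdef]
    apply Measurable.lintegral_prod_right (f := fun x t => φ t * Gs (hnorm n x / t))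
    exact (hφm.comp measurable_snd).mul hGsjoint
  -- Step A : pointwise bound
  have keyA : ∀ x, (‖roughHausdorff n Φ Ω σ f x‖₊ : ℝ≥0∞)
      ≤ E * ((ENNReal.ofReal C₁) ^ (1/p') * (B x) ^ (1/q)) := by
    intro x
    have hHold1 : ∀ s : ℝ, ∫⁻ y, (‖Ω y‖₊ : ℝ≥0∞) * (‖f (dil n s y)‖₊ : ℝ≥0∞) ∂σ
        ≤ E * (Gs s) ^ (1/q) := by
      intro s
      have hmf : Measurable fun y => (‖f (dil n s y)‖₊ : ℝ≥0∞) :=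
        (hf.comp (measurable_dil_const n s)).enorm
      have h := ENNReal.lintegral_mul_le_Lp_mul_Lq σ hconj
        (f := fun y => (‖Ω y‖₊ : ℝ≥0∞)) (g := fun y => (‖f (dil n s y)‖₊ : ℝ≥0∞))
        (by fun_prop) hmf.aemeasurable
      rw [hEeq, hGsdef]
      exact h
    have hA2 : ∀ t ∈ Ioi (0:ℝ),
        (‖∫ y, (Φ t / t) • (Ω y * f (dil n (hnorm n x / t) y)) ∂σ‖₊ : ℝ≥0∞)
        ≤ ENNReal.ofReal (Φ t / t) * (E * (Gs (hnorm n x / t)) ^ (1/q)) := by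
      intro t ht
      rw [mem_Ioi] at ht
      calc (‖∫ y, (Φ t / t) • (Ω y * f (dil n (hnorm n x / t) y)) ∂σ‖₊ : ℝ≥0∞)
          ≤ ∫⁻ y, (‖(Φ t / t) • (Ω y * f (dil n (hnorm n x / t) y))‖₊ : ℝ≥0∞) ∂σ :=
            enorm_integral_le_lintegral_enorm _
        _ = ∫⁻ y, ENNReal.ofReal (Φ t / t)
              * ((‖Ω y‖₊ : ℝ≥0∞) * (‖f (dil n (hnorm n x / t) y)‖₊ : ℝ≥0∞)) ∂σ := by
            apply lintegral_congr; intro y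
            rw [nnnorm_smul, nnnorm_mul]
            push_cast
            rw [← enorm_eq_nnnorm (Φ t / t), Real.enorm_eq_ofReal (div_nonneg (hΦ0 t) (le_of_lt ht))]
        _ = ENNReal.ofReal (Φ t / t)
              * ∫⁻ y, (‖Ω y‖₊ : ℝ≥0∞) * (‖f (dil n (hnorm n x / t) y)‖₊ : ℝ≥0∞) ∂σ :=
            lintegral_const_mul' _ _ ENNReal.ofReal_ne_top
        _ ≤ ENNReal.ofReal (Φ t / t) * (E * (Gs (hnorm n x / t)) ^ (1/q)) :=
            mul_le_mul_right (hHold1 _) _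
    have hHold2 : ∫⁻ t in Ioi (0:ℝ), ENNReal.ofReal (Φ t / t) * (Gs (hnorm n x / t)) ^ (1/q)
        ≤ (ENNReal.ofReal C₁) ^ (1/p') * (B x) ^ (1/q) := by
      set u : ℝ → ℝ≥0∞ := fun t =>
        (ENNReal.ofReal (Φ t / t)) ^ (1/p') * (ENNReal.ofReal t) ^ (-(c/p')) with hudef
      set v : ℝ → ℝ≥0∞ := fun t =>
        (ENNReal.ofReal (Φ t / t)) ^ (1/q)
          * ((ENNReal.ofReal t) ^ (c/p') * (Gs (hnorm n x / t)) ^ (1/q)) with hvdef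
      have hGst : Measurable fun t : ℝ => Gs (hnorm n x / t) :=
        hGsm.comp (measurable_const.div measurable_id)
      have hum : Measurable u := by rw [hudef]; fun_prop
      have hvm : Measurable v := by rw [hvdef]; fun_prop
      have huv : ∀ t ∈ Ioi (0:ℝ),
          ENNReal.ofReal (Φ t / t) * (Gs (hnorm n x / t)) ^ (1/q) = (u * v) t := by
        intro t ht; rw [mem_Ioi] at ht
        have e1 : (ENNReal.ofReal (Φ t / t)) ^ (1/p') * (ENNReal.ofReal (Φ t / t)) ^ (1/q)
            = ENNReal.ofReal (Φ t / t) := by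
          rw [← ENNReal.rpow_add_of_nonneg _ _ (by positivity) (by positivity), hinv,
            ENNReal.rpow_one]
        have e2 : (ENNReal.ofReal t) ^ (-(c/p')) * (ENNReal.ofReal t) ^ (c/p') = 1 := by
          rw [← ENNReal.rpow_add _ _ (ENNReal.ofReal_pos.2 ht).ne' ENNReal.ofReal_ne_top]
          simp
        calc ENNReal.ofReal (Φ t / t) * (Gs (hnorm n x / t)) ^ (1/q)
            = ((ENNReal.ofReal (Φ t / t)) ^ (1/p') * (ENNReal.ofReal (Φ t / t)) ^ (1/q))
              * (((ENNReal.ofReal t) ^ (-(c/p')) * (ENNReal.ofReal t) ^ (c/p'))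
                * (Gs (hnorm n x / t)) ^ (1/q)) := by rw [e1, e2, one_mul]
          _ = (u * v) t := by simp only [hudef, hvdef, Pi.mul_apply]; ring
      have hu1 : ∀ t ∈ Ioi (0:ℝ), u t ^ p' = ENNReal.ofReal (Φ t * t ^ (-1 - c)) := by
        intro t ht; rw [mem_Ioi] at ht
        simp only [hudef]
        rw [ENNReal.mul_rpow_of_nonneg _ _ hp'pos.le, ← ENNReal.rpow_mul, ← ENNReal.rpow_mul,
          one_div, inv_mul_cancel₀ hp'pos.ne', ENNReal.rpow_one,
          show -(c/p') * p' = -c by field_simp,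
          ENNReal.ofReal_rpow_of_pos ht,
          ← ENNReal.ofReal_mul (div_nonneg (hΦ0 t) ht.le)]
        congr 1
        rw [div_eq_mul_inv, show t⁻¹ = t ^ (-1:ℝ) from (Real.rpow_neg_one t).symm,
          mul_assoc, ← Real.rpow_add ht, sub_eq_add_neg]
      have hv1 : ∀ t ∈ Ioi (0:ℝ), v t ^ q = φ t * Gs (hnorm n x / t) := by
        intro t ht; rw [mem_Ioi] at ht
        simp only [hvdef, hφdef]
        rw [ENNReal.mul_rpow_of_nonneg _ _ hq0.le, ENNReal.mul_rpow_of_nonneg _ _ hq0.le,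
          ← ENNReal.rpow_mul, ← ENNReal.rpow_mul, ← ENNReal.rpow_mul,
          show (1/q) * q = 1 by field_simp,
          show (c/p') * q = c * (q-1) by rw [hp'def]; field_simp,
          ENNReal.rpow_one, ENNReal.rpow_one]
        ring
      calc ∫⁻ t in Ioi (0:ℝ), ENNReal.ofReal (Φ t / t) * (Gs (hnorm n x / t)) ^ (1/q)
          = ∫⁻ t in Ioi (0:ℝ), (u * v) t :=
            setLIntegral_congr_fun measurableSet_Ioi huv
        _ ≤ (∫⁻ t in Ioi (0:ℝ), u t ^ p') ^ (1/p') * (∫⁻ t in Ioi (0:ℝ), v t ^ q) ^ (1/q) :=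
            ENNReal.lintegral_mul_le_Lp_mul_Lq _ hconj hum.aemeasurable hvm.aemeasurable
        _ = (ENNReal.ofReal C₁) ^ (1/p') * (B x) ^ (1/q) := by
            rw [setLIntegral_congr_fun measurableSet_Ioi hu1, hA1,
              setLIntegral_congr_fun measurableSet_Ioi hv1, hBdef]
    calc (‖roughHausdorff n Φ Ω σ f x‖₊ : ℝ≥0∞)
        ≤ ∫⁻ t in Ioi (0:ℝ),
            (‖∫ y, (Φ t / t) • (Ω y * f (dil n (hnorm n x / t) y)) ∂σ‖₊ : ℝ≥0∞) :=
          enorm_integral_le_lintegral_enorm _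
      _ ≤ ∫⁻ t in Ioi (0:ℝ), ENNReal.ofReal (Φ t / t) * (E * (Gs (hnorm n x / t)) ^ (1/q)) :=
          lintegral_mono_ae ((ae_restrict_iff' measurableSet_Ioi).2 (ae_of_all _ hA2))
      _ = E * ∫⁻ t in Ioi (0:ℝ), ENNReal.ofReal (Φ t / t) * (Gs (hnorm n x / t)) ^ (1/q) := by
          rw [← lintegral_const_mul' E _ hEtop]
          apply lintegral_congr; intro t; ring
      _ ≤ E * ((ENNReal.ofReal C₁) ^ (1/p') * (B x) ^ (1/q)) := mul_le_mul_right hHold2 _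
  -- Step E': Morrey control of f on balls
  set M := morreyNorm n q γ lam f with hMdef
  have hJle : ∀ s : ℝ, 0 < s →
      ∫⁻ x in hball n s, w x * (‖f x‖₊ : ℝ≥0∞) ^ q
        ≤ (σ univ * ENNReal.ofReal (s ^ P / P)) ^ e * M ^ q := by
    intro s hs
    have hconv : ∫⁻ x in hball n s, ENNReal.ofReal (‖f x‖ ^ q * hnorm n x ^ γ)
        = ∫⁻ x in hball n s, w x * (‖f x‖₊ : ℝ≥0∞) ^ q := by
      apply lintegral_congr; intro x
      rw [ofReal_norm_rpow_mul _ (Real.rpow_nonneg (hnorm_nonneg n x) γ) hq0.le]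
      simp only [hwdef]; ring
    set W' := ∫⁻ x in hball n s, ENNReal.ofReal (hnorm n x ^ γ) with hW'def
    have hW'v : W' = σ univ * ENNReal.ofReal (s ^ P / P) := hWs s hs
    have hW'0 : W' ≠ 0 := by rw [hW'v]; exact hWne0 s hs
    have hW't : W' ≠ ∞ := by rw [hW'v]; exact hWnetop s hs
    have hMs : (W' ^ (-e) *
        ∫⁻ x in hball n s, ENNReal.ofReal (‖f x‖ ^ q * hnorm n x ^ γ)) ^ (1/q) ≤ M :=
      le_iSup₂ (f := fun (R : ℝ) (_ : 0 < R) =>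
        ((∫⁻ x in hball n R, ENNReal.ofReal (hnorm n x ^ γ)) ^ (-(1 + lam * q)) *
          ∫⁻ x in hball n R, ENNReal.ofReal (‖f x‖ ^ q * hnorm n x ^ γ)) ^ (1/q)) s hs
    have h2 := ENNReal.rpow_le_rpow hMs hq0.le
    rw [← ENNReal.rpow_mul, show (1/q) * q = 1 by field_simp, ENNReal.rpow_one] at h2
    have hcancel : W' ^ e * W' ^ (-e) = 1 := by
      rw [← ENNReal.rpow_add _ _ hW'0 hW't, add_neg_cancel, ENNReal.rpow_zero]
    calc ∫⁻ x in hball n s, w x * (‖f x‖₊ : ℝ≥0∞) ^ q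
        = (W' ^ e * W' ^ (-e)) * ∫⁻ x in hball n s, ENNReal.ofReal (‖f x‖ ^ q * hnorm n x ^ γ) := by
          rw [hcancel, one_mul, hconv]
      _ = W' ^ e * (W' ^ (-e) * ∫⁻ x in hball n s, ENNReal.ofReal (‖f x‖ ^ q * hnorm n x ^ γ)) := by
          ring
      _ ≤ W' ^ e * M ^ q := mul_le_mul_right h2 _
      _ = (σ univ * ENNReal.ofReal (s ^ P / P)) ^ e * M ^ q := by rw [hW'v]
  -- unfold the goal sup
  have goalshape : morreyNorm n q γ lam (roughHausdorff n Φ Ω σ f)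
      = ⨆ (R : ℝ) (_ : 0 < R),
        ((∫⁻ x in hball n R, ENNReal.ofReal (hnorm n x ^ γ)) ^ (-(1 + lam * q)) *
          ∫⁻ x in hball n R, ENNReal.ofReal
            (‖roughHausdorff n Φ Ω σ f x‖ ^ q * hnorm n x ^ γ)) ^ (1/q) := rfl
  rw [goalshape]
  apply iSup₂_le; intro R hR
  -- Step D : polar computation for fixed t
  have hXeq : ∀ t : ℝ, 0 < t →
      ∫⁻ x in hball n R, Gs (hnorm n x / t) * w x
        = σ univ * (ENNReal.ofReal t * (ENNReal.ofReal (t ^ γ)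
            * ENNReal.ofReal ((t:ℝ) ^ (2*n+1))))
          * ∫⁻ x in hball n (R / t), w x * (‖f x‖₊ : ℝ≥0∞) ^ q := by
    intro t ht
    have hFm : Measurable fun ρ : ℝ => Gs (ρ/t) * ENNReal.ofReal (ρ^γ) := by
      have := hGsm; fun_prop
    have hL := polar_ball hσ hpolar (s := R)
      (fun ρ => Gs (ρ/t) * ENNReal.ofReal (ρ^γ)) hFm (fun _ => (1:ℝ≥0∞)) measurable_const
    have hfq : Measurable fun x => (‖f x‖₊ : ℝ≥0∞)^q := by
      have := hf; fun_prop
    have hR2 : ∫⁻ x in hball n (R/t), ENNReal.ofReal (hnorm n x ^ γ) * (‖f x‖₊:ℝ≥0∞)^q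
        = ∫⁻ u in Ioc (0:ℝ) (R/t),
            ENNReal.ofReal (u^γ) * Gs u * ENNReal.ofReal (u ^ (2*n+1)) :=
      polar_ball hσ hpolar (s := R/t) (fun ρ => ENNReal.ofReal (ρ^γ)) (by fun_prop) _ hfq
    set K : ℝ → ℝ≥0∞ :=
      fun r => Gs (r/t) * ENNReal.ofReal (r^γ) * ENNReal.ofReal (r ^ (2*n+1)) with hKdef
    have hKm : Measurable K := by
      have := hGsm; rw [hKdef]; fun_prop
    have hstep1 : ∫⁻ r in Ioc (0:ℝ) R,
        (Gs (r/t) * ENNReal.ofReal (r^γ)) * (∫⁻ _, (1:ℝ≥0∞) ∂σ) * ENNReal.ofReal (r ^ (2*n+1))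
        = σ univ * ∫⁻ r in Ioc (0:ℝ) R, K r := by
      rw [lintegral_one, ← lintegral_const_mul' (σ univ) _ hσtop]
      apply lintegral_congr; intro r; simp only [hKdef]; ring
    have hstep2 : ∫⁻ r in Ioc (0:ℝ) R, K r
        = ∫⁻ r in Ioi (0:ℝ), (Ioc (0:ℝ) R).indicator K r := by
      rw [lintegral_indicator measurableSet_Ioc, Measure.restrict_restrict measurableSet_Ioc,
        inter_eq_left.2 (fun x hx => hx.1)]
    have hstep3 := lintegral_Ioi_comp_mul ht ((Ioc (0:ℝ) R).indicator K)
      (hKm.indicator measurableSet_Ioc)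
    have hstep4 : ∀ u ∈ Ioi (0:ℝ), (Ioc (0:ℝ) R).indicator K (t*u)
        = (ENNReal.ofReal (t^γ) * ENNReal.ofReal ((t:ℝ) ^ (2*n+1)))
          * (Ioc (0:ℝ) (R/t)).indicator
              (fun u => ENNReal.ofReal (u^γ) * Gs u * ENNReal.ofReal (u ^ (2*n+1))) u := by
      intro u hu; rw [mem_Ioi] at hu
      by_cases hm : u ∈ Ioc (0:ℝ) (R/t)
      · have hm' : t*u ∈ Ioc (0:ℝ) R := by
          refine ⟨mul_pos ht hu, ?_⟩
          have := (le_div_iff₀ ht).1 hm.2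
          linarith [this, mul_comm t u]
        rw [Set.indicator_of_mem hm', Set.indicator_of_mem hm]
        simp only [hKdef]
        rw [show t*u/t = u from by field_simp,
          Real.mul_rpow ht.le hu.le, mul_pow,
          ENNReal.ofReal_mul (Real.rpow_nonneg ht.le γ),
          ENNReal.ofReal_mul (pow_nonneg ht.le _)]
        ring
      · have hm' : t*u ∉ Ioc (0:ℝ) R := by
          intro h
          apply hm
          refine ⟨hu, (le_div_iff₀ ht).2 ?_⟩
          linarith [h.2, mul_comm t u]
        rw [Set.indicator_of_notMem hm', Set.indicator_of_notMem hm, mul_zero]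
    have hstep5 : ∫⁻ u in Ioi (0:ℝ),
        (Ioc (0:ℝ) (R/t)).indicator
          (fun u => ENNReal.ofReal (u^γ) * Gs u * ENNReal.ofReal (u ^ (2*n+1))) u
        = ∫⁻ u in Ioc (0:ℝ) (R/t),
            ENNReal.ofReal (u^γ) * Gs u * ENNReal.ofReal (u ^ (2*n+1)) := by
      rw [lintegral_indicator measurableSet_Ioc, Measure.restrict_restrict measurableSet_Ioc,
        inter_eq_left.2 (fun x hx => hx.1)]
    calc ∫⁻ x in hball n R, Gs (hnorm n x / t) * w x
        = ∫⁻ x in hball n R,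
            (Gs (hnorm n x / t) * ENNReal.ofReal (hnorm n x ^ γ)) * 1 := by
          apply lintegral_congr; intro x; simp only [hwdef, mul_one]
      _ = ∫⁻ r in Ioc (0:ℝ) R, (Gs (r/t) * ENNReal.ofReal (r^γ))
            * (∫⁻ _, (1:ℝ≥0∞) ∂σ) * ENNReal.ofReal (r ^ (2*n+1)) := hL
      _ = σ univ * ∫⁻ r in Ioc (0:ℝ) R, K r := hstep1
      _ = σ univ * (ENNReal.ofReal t * ∫⁻ u in Ioi (0:ℝ), (Ioc (0:ℝ) R).indicator K (t*u)) := by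
          rw [hstep2, hstep3]
      _ = σ univ * (ENNReal.ofReal t * ((ENNReal.ofReal (t^γ)
            * ENNReal.ofReal ((t:ℝ) ^ (2*n+1)))
          * ∫⁻ u in Ioc (0:ℝ) (R/t),
              ENNReal.ofReal (u^γ) * Gs u * ENNReal.ofReal (u ^ (2*n+1)))) := by
          rw [setLIntegral_congr_fun measurableSet_Ioi hstep4,
            lintegral_const_mul' _ _
              (ENNReal.mul_ne_top ENNReal.ofReal_ne_top ENNReal.ofReal_ne_top), hstep5]
      _ = σ univ * (ENNReal.ofReal t * (ENNReal.ofReal (t ^ γ)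
            * ENNReal.ofReal ((t:ℝ) ^ (2*n+1))))
          * ∫⁻ x in hball n (R / t), w x * (‖f x‖₊ : ℝ≥0∞) ^ q := by
          rw [← hR2, show ∫⁻ x in hball n (R/t),
              ENNReal.ofReal (hnorm n x ^ γ) * (‖f x‖₊:ℝ≥0∞)^q
            = ∫⁻ x in hball n (R/t), w x * (‖f x‖₊:ℝ≥0∞)^q from
              lintegral_congr fun x => by simp only [hwdef]]
          ring
  -- the main estimate for fixed R
  rw [← hedef, hCofReal, hWs R hR]
  set κ := E ^ q * (ENNReal.ofReal C₁) ^ ((1/p') * q) with hκdef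
  have hκtop : κ ≠ ∞ := ENNReal.mul_ne_top
    (ENNReal.rpow_ne_top_of_nonneg hq0.le hEtop)
    (ENNReal.rpow_ne_top_of_nonneg (by positivity) ENNReal.ofReal_ne_top)
  have hIR : (∫⁻ x in hball n R,
      ENNReal.ofReal (‖roughHausdorff n Φ Ω σ f x‖ ^ q * hnorm n x ^ γ))
      ≤ κ * ∫⁻ x in hball n R, B x * w x := by
    rw [← lintegral_const_mul' κ _ hκtop]
    apply lintegral_mono
    intro x
    have h1 : (‖roughHausdorff n Φ Ω σ f x‖₊ : ℝ≥0∞) ^ q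
        ≤ (E * ((ENNReal.ofReal C₁) ^ (1/p') * (B x) ^ (1/q))) ^ q :=
      ENNReal.rpow_le_rpow (keyA x) hq0.le
    have h2 : (E * ((ENNReal.ofReal C₁) ^ (1/p') * (B x) ^ (1/q))) ^ q = κ * B x := by
      rw [ENNReal.mul_rpow_of_nonneg _ _ hq0.le, ENNReal.mul_rpow_of_nonneg _ _ hq0.le,
        ← ENNReal.rpow_mul, ← ENNReal.rpow_mul, show (1/q)*q = 1 by field_simp,
        ENNReal.rpow_one, hκdef]
      ring
    calc ENNReal.ofReal (‖roughHausdorff n Φ Ω σ f x‖ ^ q * hnorm n x ^ γ)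
        = (‖roughHausdorff n Φ Ω σ f x‖₊ : ℝ≥0∞) ^ q * ENNReal.ofReal (hnorm n x ^ γ) :=
          ofReal_norm_rpow_mul _ (Real.rpow_nonneg (hnorm_nonneg n x) γ) hq0.le
      _ ≤ (E * ((ENNReal.ofReal C₁) ^ (1/p') * (B x) ^ (1/q))) ^ q
            * ENNReal.ofReal (hnorm n x ^ γ) := mul_le_mul_left h1 _
      _ = κ * (B x * w x) := by rw [h2]; simp only [hwdef]; ring
  have hmeas_big : Measurable (Function.uncurry
      fun (x : Fin (2*n+1) → ℝ) (t : ℝ) => (φ t * Gs (hnorm n x / t)) * w x) := by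
    apply Measurable.mul
    · exact (hφm.comp measurable_snd).mul hGsjoint
    · exact hwm.comp measurable_fst
  have hswap : ∫⁻ x in hball n R, B x * w x
      = ∫⁻ t in Ioi (0:ℝ), φ t * ∫⁻ x in hball n R, Gs (hnorm n x / t) * w x := by
    calc ∫⁻ x in hball n R, B x * w x
        = ∫⁻ x in hball n R, ∫⁻ t in Ioi (0:ℝ), (φ t * Gs (hnorm n x / t)) * w x := by
          apply lintegral_congr; intro x
          simp only [hBdef]
          exact (lintegral_mul_const' (w x) _ (hwtop x)).symm
      _ = ∫⁻ t in Ioi (0:ℝ), ∫⁻ x in hball n R, (φ t * Gs (hnorm n x / t)) * w x :=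
          lintegral_lintegral_swap hmeas_big.aemeasurable
      _ = ∫⁻ t in Ioi (0:ℝ), φ t * ∫⁻ x in hball n R, Gs (hnorm n x / t) * w x := by
          refine setLIntegral_congr_fun measurableSet_Ioi (fun t ht => ?_)
          rw [← lintegral_const_mul' (φ t) _ (hφtop t ht)]
          exact lintegral_congr fun x => by ring
  have hper : ∀ t ∈ Ioi (0:ℝ), φ t * ∫⁻ x in hball n R, Gs (hnorm n x / t) * w x
      ≤ (σ univ * σ univ ^ e) * ((M ^ q * ENNReal.ofReal ((R^P/P)^e))
          * ENNReal.ofReal (Φ t * t ^ (-1 - c))) := by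
    intro t ht; rw [mem_Ioi] at ht
    rw [hXeq t ht]
    have hJ := hJle (R/t) (div_pos hR ht)
    have hWRt : (σ univ * ENNReal.ofReal ((R/t) ^ P / P)) ^ e
        = σ univ ^ e * ENNReal.ofReal (((R/t)^P/P)^e) := by
      rw [ENNReal.mul_rpow_of_nonneg _ _ he.le,
        ENNReal.ofReal_rpow_of_pos (hWpos _ (div_pos hR ht))]
    have hreal : Φ t / t * (t^(c*(q-1)) * (t * (t^γ
          * ((t:ℝ)^(2*n+1) * ((R/t)^P/P)^e))))
        = (R^P/P)^e * (Φ t * t^(-1-c)) := by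
      have h7 : ((R/t)^P/P)^e = (R^P/P)^e * t^(-(P*e)) := by
        rw [Real.div_rpow hR.le ht.le,
          show R^P / t^P / P = (R^P/P) * (t^P)⁻¹ from by ring,
          Real.mul_rpow (div_nonneg (Real.rpow_nonneg hR.le P) hP.le)
            (inv_nonneg.2 (Real.rpow_nonneg ht.le P)),
          Real.inv_rpow (Real.rpow_nonneg ht.le P), ← Real.rpow_mul ht.le,
          ← Real.rpow_neg ht.le]
      have ht1 : (t:ℝ)^(2*n+1) = t^(((2*n+1:ℕ)):ℝ) := (Real.rpow_natCast t _).symm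
      have merge : ∀ a b : ℝ, t^a * t^b = t^(a+b) := fun a b => (Real.rpow_add ht a b).symm
      calc Φ t / t * (t^(c*(q-1)) * (t * (t^γ * ((t:ℝ)^(2*n+1) * ((R/t)^P/P)^e))))
          = (R^P/P)^e * Φ t * (t⁻¹ * (t^(c*(q-1)) * ((t^(1:ℝ) * t^γ)
              * (t^(((2*n+1:ℕ)):ℝ) * t^(-(P*e)))))) := by
            rw [h7, ht1, Real.rpow_one]; ring
        _ = (R^P/P)^e * Φ t * (t⁻¹ * t^(c*(q-1) + ((1+γ) + ((((2*n+1:ℕ)):ℝ) + -(P*e))))) := by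
            rw [merge 1 γ, merge ((((2*n+1:ℕ)):ℝ)) (-(P*e)), merge (1+γ), merge (c*(q-1))]
        _ = (R^P/P)^e * (Φ t * t^(-1-c)) := by
            rw [show t⁻¹ = t^(-1:ℝ) from (Real.rpow_neg_one t).symm,
              merge (-1) (c*(q-1) + ((1+γ) + ((((2*n+1:ℕ)):ℝ) + -(P*e)))),
              show (-1 + (c*(q-1) + ((1+γ) + ((((2*n+1:ℕ)):ℝ) + -(P*e))))) = -1-c from by
                push_cast; rw [hcdef, hedef, hPdef]; ring]
            ring
    calc φ t * (σ univ * (ENNReal.ofReal t * (ENNReal.ofReal (t ^ γ)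
            * ENNReal.ofReal ((t:ℝ)^(2*n+1))))
          * ∫⁻ x in hball n (R/t), w x * (‖f x‖₊:ℝ≥0∞)^q)
        ≤ φ t * (σ univ * (ENNReal.ofReal t * (ENNReal.ofReal (t ^ γ)
            * ENNReal.ofReal ((t:ℝ)^(2*n+1))))
          * ((σ univ * ENNReal.ofReal ((R/t)^P/P))^e * M^q)) :=
          mul_le_mul_right (mul_le_mul_right hJ _) _
      _ = (σ univ * σ univ ^ e) * (M^q * (ENNReal.ofReal (Φ t / t)
            * (ENNReal.ofReal (t^(c*(q-1))) * (ENNReal.ofReal t * (ENNReal.ofReal (t^γ)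
              * (ENNReal.ofReal ((t:ℝ)^(2*n+1)) * ENNReal.ofReal (((R/t)^P/P)^e))))))) := by
          rw [hWRt]
          simp only [hφdef]
          rw [ENNReal.ofReal_rpow_of_pos ht]
          ring
      _ = (σ univ * σ univ ^ e) * (M^q * ENNReal.ofReal (Φ t / t * (t^(c*(q-1))
            * (t * (t^γ * ((t:ℝ)^(2*n+1) * ((R/t)^P/P)^e)))))) := by
          rw [← ENNReal.ofReal_mul (pow_nonneg ht.le _),
            ← ENNReal.ofReal_mul (Real.rpow_nonneg ht.le γ),
            ← ENNReal.ofReal_mul ht.le,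
            ← ENNReal.ofReal_mul (Real.rpow_nonneg ht.le _),
            ← ENNReal.ofReal_mul (div_nonneg (hΦ0 t) ht.le)]
      _ = (σ univ * σ univ ^ e) * ((M ^ q * ENNReal.ofReal ((R^P/P)^e))
            * ENNReal.ofReal (Φ t * t ^ (-1 - c))) := by
          rw [hreal, ENNReal.ofReal_mul (Real.rpow_nonneg (le_of_lt (hWpos R hR)) e)]
          ring
  have hmg : Measurable fun t : ℝ => ENNReal.ofReal (Φ t * t ^ (-1-c)) := by
    have := hΦm; fun_prop
  have hBW : ∫⁻ x in hball n R, B x * w x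
      ≤ (σ univ * σ univ ^ e) * ((M ^ q * ENNReal.ofReal ((R^P/P)^e)) * ENNReal.ofReal C₁) := by
    rw [hswap]
    calc ∫⁻ t in Ioi (0:ℝ), φ t * ∫⁻ x in hball n R, Gs (hnorm n x / t) * w x
        ≤ ∫⁻ t in Ioi (0:ℝ), (σ univ * σ univ ^ e) * ((M ^ q * ENNReal.ofReal ((R^P/P)^e))
            * ENNReal.ofReal (Φ t * t ^ (-1 - c))) :=
          lintegral_mono_ae ((ae_restrict_iff' measurableSet_Ioi).2 (ae_of_all _ hper))
      _ = ∫⁻ t in Ioi (0:ℝ), ((σ univ * σ univ ^ e) * (M ^ q * ENNReal.ofReal ((R^P/P)^e)))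
            * ENNReal.ofReal (Φ t * t ^ (-1 - c)) := lintegral_congr fun t => by ring
      _ = ((σ univ * σ univ ^ e) * (M ^ q * ENNReal.ofReal ((R^P/P)^e))) * ENNReal.ofReal C₁ := by
          rw [lintegral_const_mul _ hmg, hA1]
      _ = (σ univ * σ univ ^ e) * ((M ^ q * ENNReal.ofReal ((R^P/P)^e)) * ENNReal.ofReal C₁) := by
          ring
  -- final assembly
  have hXe : (σ univ * ENNReal.ofReal (R ^ P / P)) ^ e
      = σ univ ^ e * ENNReal.ofReal ((R^P/P)^e) := by
    rw [ENNReal.mul_rpow_of_nonneg _ _ he.le, ENNReal.ofReal_rpow_of_pos (hWpos R hR)]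
  have hXcancel : (σ univ * ENNReal.ofReal (R ^ P / P)) ^ (-e)
      * (σ univ * ENNReal.ofReal (R ^ P / P)) ^ e = 1 := by
    rw [← ENNReal.rpow_add _ _ (hWne0 R hR) (hWnetop R hR), neg_add_cancel, ENNReal.rpow_zero]
  have hC'q : (ENNReal.ofReal C₁)^((1/p')*q) * ENNReal.ofReal C₁ = (ENNReal.ofReal C₁)^q := by
    by_cases h0 : C₁ = 0
    · rw [h0, ENNReal.ofReal_zero, ENNReal.zero_rpow_of_pos (by rw [hqp']; linarith),
        ENNReal.zero_rpow_of_pos hq0, mul_zero]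
    · have h0' : ENNReal.ofReal C₁ ≠ 0 := by
        rw [ne_eq, ENNReal.ofReal_eq_zero, not_le]
        exact lt_of_le_of_ne hC₁0 (Ne.symm h0)
      nth_rewrite 2 [← ENNReal.rpow_one (ENNReal.ofReal C₁)]
      rw [← ENNReal.rpow_add _ _ h0' ENNReal.ofReal_ne_top, hqp', sub_add_cancel]
  calc ((σ univ * ENNReal.ofReal (R ^ P / P)) ^ (-e) * ∫⁻ x in hball n R,
        ENNReal.ofReal (‖roughHausdorff n Φ Ω σ f x‖ ^ q * hnorm n x ^ γ)) ^ (1/q)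
      ≤ ((σ univ * ENNReal.ofReal (R ^ P / P)) ^ (-e)
          * (κ * ((σ univ * σ univ ^ e) * ((M ^ q * ENNReal.ofReal ((R^P/P)^e))
            * ENNReal.ofReal C₁)))) ^ (1/q) := by
        apply ENNReal.rpow_le_rpow _ (by positivity)
        exact mul_le_mul_right (hIR.trans (mul_le_mul_right hBW _)) _
    _ = ((E^q * ((ENNReal.ofReal C₁)^((1/p')*q) * ENNReal.ofReal C₁))
          * (σ univ * M^q)) ^ (1/q) := by
        rw [show (σ univ * ENNReal.ofReal (R ^ P / P)) ^ (-e)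
            * (κ * ((σ univ * σ univ ^ e) * ((M ^ q * ENNReal.ofReal ((R^P/P)^e))
              * ENNReal.ofReal C₁)))
          = ((σ univ * ENNReal.ofReal (R ^ P / P)) ^ (-e)
              * (σ univ * ENNReal.ofReal (R ^ P / P)) ^ e)
            * ((E^q * ((ENNReal.ofReal C₁)^((1/p')*q) * ENNReal.ofReal C₁))
              * (σ univ * M^q)) from by rw [hXe, hκdef]; ring, hXcancel, one_mul]
    _ = σ univ ^ ((1:ℝ)/q) * ENNReal.ofReal C₁ * E * M := by
        rw [hC'q, ENNReal.mul_rpow_of_nonneg _ _ (by positivity),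
          ENNReal.mul_rpow_of_nonneg _ _ (by positivity),
          ENNReal.mul_rpow_of_nonneg _ _ (by positivity),
          ← ENNReal.rpow_mul E, ← ENNReal.rpow_mul (ENNReal.ofReal C₁),
          ← ENNReal.rpow_mul M, show q * (1/q) = 1 by field_simp,
          ENNReal.rpow_one, ENNReal.rpow_one, ENNReal.rpow_one]
        ring
end
end
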